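/- For every θ ∈ ℂ with 0 < Im θ < 2π, the function t ↦ (1/t)·[−4·sinh(t(N−1)/N)·sinh(tB/(2N))·sinh(t(2−B)/(2N))/sinh²(t)]·cosh(t(1 − θ/(iπ))) is integrable on (0,∞), and the function F^T(θ) = exp of this integral is holomorphic (complex differentiable) on the open strip {θ : 0 < Im θ < 2π}. -/

import Mathlib

open Complex MeasureTheory

/-- The integrand of the minimal form factor of the affine `A_{N−1}`-Toda model:
`(1/t)·[−4·sinh(t(N−1)/N)·sinh(tB/(2N))·sinh(t(2−B)/(2N))/sinh²(t)]·cosh(t(1 − θ/(iπ)))`. -/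
noncomputable def fT (N : ℕ) (B : ℝ) (θ : ℂ) (t : ℝ) : ℂ :=
  (1 / (t : ℂ)) *
    (-4 * Complex.sinh ((t : ℂ) * (N - 1) / N) * Complex.sinh ((t : ℂ) * (B : ℂ) / (2 * N)) *
      Complex.sinh ((t : ℂ) * (2 - (B : ℂ)) / (2 * N)) / (Complex.sinh (t : ℂ)) ^ 2) *
    Complex.cosh ((t : ℂ) * (1 - θ / (I * (Real.pi : ℂ))))

/-- The minimal form factor of the affine `A_{N−1}`-Toda model. -/
noncomputable def FT (N : ℕ) (B : ℝ) (θ : ℂ) : ℂ :=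
  Complex.exp (∫ t in Set.Ioi (0 : ℝ), fT N B θ t)

/-! ### Auxiliary elementary inequalities -/

lemma sinh_le_sinh_mul_exp {x t : ℝ} (hxt : x ≤ t) :
    Real.sinh x ≤ Real.sinh t * Real.exp (x - t) := by
  have h : Real.exp (x - 2*t) ≤ Real.exp (-x) := Real.exp_le_exp.2 (by linarith)
  have e1 : Real.exp t * Real.exp (x - t) = Real.exp x := by
    rw [← Real.exp_add]; ring_nf
  have e2 : Real.exp (-t) * Real.exp (x - t) = Real.exp (x - 2*t) := by
    rw [← Real.exp_add]; ring_nf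
  rw [Real.sinh_eq, Real.sinh_eq]
  nlinarith [Real.exp_pos (x - t)]

lemma sinh_le_mul_exp (x : ℝ) : Real.sinh x ≤ x * Real.exp x := by
  have h : 1 + (-(2*x)) ≤ Real.exp (-(2*x)) := by
    have := Real.add_one_le_exp (-(2*x)); linarith
  have e1 : Real.exp x * Real.exp (-(2*x)) = Real.exp (-x) := by
    rw [← Real.exp_add]; ring_nf
  rw [Real.sinh_eq]
  nlinarith [Real.exp_pos x]

lemma norm_cosh_le (z : ℂ) : ‖Complex.cosh z‖ ≤ Real.exp |z.re| := by
  have hz : Complex.cosh z = (Complex.exp z + Complex.exp (-z)) / 2 := rfl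
  rw [hz]
  have h1 : ‖Complex.exp z‖ ≤ Real.exp |z.re| := by
    rw [Complex.norm_exp]
    exact Real.exp_le_exp.2 (le_abs_self _)
  have h2 : ‖Complex.exp (-z)‖ ≤ Real.exp |z.re| := by
    rw [Complex.norm_exp]
    exact Real.exp_le_exp.2 (by have := neg_abs_le z.re; simp; linarith)
  calc ‖(Complex.exp z + Complex.exp (-z)) / 2‖
      ≤ (‖Complex.exp z‖ + ‖Complex.exp (-z)‖)/2 := by
        rw [norm_div]; simp only [Complex.norm_two]
        gcongr; exact norm_add_le _ _
    _ ≤ Real.exp |z.re| := by linarith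

lemma norm_sinh_le (z : ℂ) : ‖Complex.sinh z‖ ≤ Real.exp |z.re| := by
  have hz : Complex.sinh z = (Complex.exp z - Complex.exp (-z)) / 2 := rfl
  rw [hz]
  have h1 : ‖Complex.exp z‖ ≤ Real.exp |z.re| := by
    rw [Complex.norm_exp]
    exact Real.exp_le_exp.2 (le_abs_self _)
  have h2 : ‖Complex.exp (-z)‖ ≤ Real.exp |z.re| := by
    rw [Complex.norm_exp]
    exact Real.exp_le_exp.2 (by have := neg_abs_le z.re; simp; linarith)
  calc ‖(Complex.exp z - Complex.exp (-z)) / 2‖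
      ≤ (‖Complex.exp z‖ + ‖Complex.exp (-z)‖)/2 := by
        rw [norm_div]; simp only [Complex.norm_two]
        gcongr; exact norm_sub_le _ _
    _ ≤ Real.exp |z.re| := by linarith

lemma w_re (θ : ℂ) : (1 - θ / (I * (Real.pi : ℂ))).re = 1 - θ.im / Real.pi := by
  have hπ : (Real.pi : ℝ) ≠ 0 := Real.pi_ne_zero
  simp [Complex.sub_re, Complex.div_re, Complex.mul_re, Complex.mul_im, Complex.normSq_apply]
  field_simp

/-! ### The `θ`-independent factor -/

/-- The `θ`-independent part of the integrand. -/
noncomputable def gT (N : ℕ) (B : ℝ) (t : ℝ) : ℂ :=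
  -4 * Complex.sinh ((t : ℂ) * (N - 1) / N) * Complex.sinh ((t : ℂ) * (B : ℂ) / (2 * N)) *
      Complex.sinh ((t : ℂ) * (2 - (B : ℂ)) / (2 * N)) / (Complex.sinh (t : ℂ)) ^ 2

/-- The `θ`-derivative of the integrand. -/
noncomputable def fT' (N : ℕ) (B : ℝ) (θ : ℂ) (t : ℝ) : ℂ :=
  (1 / (t : ℂ)) * gT N B t *
    (Complex.sinh ((t : ℂ) * (1 - θ / (I * (Real.pi : ℂ)))) *
      ((t : ℂ) * -(1 / (I * (Real.pi : ℂ)))))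

lemma gT_real (N : ℕ) (B : ℝ) (t : ℝ) :
    gT N B t = ((-4 * Real.sinh (t * ((N:ℝ) - 1) / N) * Real.sinh (t * B / (2 * N)) *
      Real.sinh (t * (2 - B) / (2 * N)) / (Real.sinh t) ^ 2 : ℝ) : ℂ) := by
  unfold gT
  push_cast [Complex.ofReal_sinh]
  norm_num

set_option maxHeartbeats 1000000 in
lemma gT_bounds (N : ℕ) (hN : 2 ≤ N) (B : ℝ) (hB0 : 0 < B) (hB2 : B < 2) {t : ℝ} (ht : 0 < t) :
    ‖gT N B t‖ ≤ 2 * t * Real.exp (-t) ∧ ‖gT N B t‖ ≤ 2 * Real.exp (-t) := by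
  have hNR : (2:ℝ) ≤ (N:ℝ) := by exact_mod_cast hN
  have hN0 : (0:ℝ) < N := by linarith
  set x1 := t * ((N:ℝ) - 1) / N with hx1
  set x2 := t * B / (2 * N) with hx2
  set x3 := t * (2 - B) / (2 * N) with hx3
  have hx1p : 0 < x1 := by rw [hx1]; apply div_pos (by nlinarith) hN0
  have hx2p : 0 < x2 := by rw [hx2]; apply div_pos (by nlinarith) (by nlinarith)
  have hx3p : 0 < x3 := by rw [hx3]; apply div_pos (by nlinarith) (by nlinarith)
  have hx1t : x1 ≤ t := by rw [hx1, div_le_iff₀ hN0]; nlinarith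
  have hx2t : x2 ≤ t := by rw [hx2, div_le_iff₀ (by positivity : (0:ℝ) < 2*N)]; nlinarith
  have hx3t : x3 ≤ t := by rw [hx3, div_le_iff₀ (by positivity : (0:ℝ) < 2*N)]; nlinarith
  have hsum : x1 + x2 + x3 = t := by rw [hx1, hx2, hx3]; field_simp; ring
  have h42 : 4 * x2 ≤ 2 * t := by
    rw [hx2, show (4:ℝ) * (t * B / (2*N)) = 2*t*B/N by ring, div_le_iff₀ hN0]
    nlinarith
  set s1 := Real.sinh x1 with hs1d
  set s2 := Real.sinh x2 with hs2d
  set s3 := Real.sinh x3 with hs3d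
  set s := Real.sinh t with hsd
  have hs : 0 < s := by rw [hsd]; exact Real.sinh_pos_iff.2 ht
  have hs1 : 0 < s1 := by rw [hs1d]; exact Real.sinh_pos_iff.2 hx1p
  have hs2 : 0 < s2 := by rw [hs2d]; exact Real.sinh_pos_iff.2 hx2p
  have hs3 : 0 < s3 := by rw [hs3d]; exact Real.sinh_pos_iff.2 hx3p
  have h1 : s1 ≤ s * Real.exp (x1 - t) := by
    rw [hs1d, hsd]; exact sinh_le_sinh_mul_exp hx1t
  have h2a : s2 ≤ x2 * Real.exp x2 := by rw [hs2d]; exact sinh_le_mul_exp x2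
  have h2b : s2 ≤ s * Real.exp (x2 - t) := by
    rw [hs2d, hsd]; exact sinh_le_sinh_mul_exp hx2t
  have h3 : s3 ≤ s * Real.exp (x3 - t) := by
    rw [hs3d, hsd]; exact sinh_le_sinh_mul_exp hx3t
  have hsle : s ≤ Real.exp t / 2 := by
    rw [hsd, Real.sinh_eq]; linarith [Real.exp_pos (-t)]
  have hnorm : ‖gT N B t‖ = 4 * s1 * s2 * s3 / s ^ 2 := by
    rw [gT_real, Complex.norm_real, Real.norm_eq_abs, ← hx1, ← hx2, ← hx3,
      ← hs1d, ← hs2d, ← hs3d, ← hsd]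
    have hr : -4 * s1 * s2 * s3 / s ^ 2 = -(4 * s1 * s2 * s3 / s ^ 2) := by ring
    rw [hr, abs_neg, _root_.abs_of_nonneg (div_nonneg
      (by nlinarith [mul_pos (mul_pos hs1 hs2) hs3]) (sq_nonneg s))]
  clear_value x1 x2 x3 s1 s2 s3 s
  have eexp1 : Real.exp (x1 - t) * Real.exp x2 * Real.exp (x3 - t) = Real.exp (-t) := by
    rw [← Real.exp_add, ← Real.exp_add]; congr 1; linarith
  have eexp2 : Real.exp (x1 - t) * Real.exp (x2 - t) * Real.exp (x3 - t)
      = Real.exp (-t) * Real.exp (-t) := by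
    rw [← Real.exp_add, ← Real.exp_add, ← Real.exp_add]; congr 1; linarith
  have hexpinv : Real.exp t * Real.exp (-t) = 1 := by
    rw [← Real.exp_add]; norm_num
  constructor
  · rw [hnorm, div_le_iff₀ (pow_pos hs 2)]
    have key1 : 4 * s1 * s2 * s3 ≤ 4 * x2 * Real.exp (-t) * s ^ 2 := by
      calc 4 * s1 * s2 * s3
          ≤ 4 * (s * Real.exp (x1 - t)) * (x2 * Real.exp x2) * (s * Real.exp (x3 - t)) := by
            apply mul_le_mul (mul_le_mul (by linarith) h2a hs2.le
              (by nlinarith [Real.exp_pos (x1 - t)])) h3 hs3.le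
              (by nlinarith [Real.exp_pos (x1 - t), Real.exp_pos x2,
                mul_pos hs (Real.exp_pos (x1 - t)), mul_pos hx2p (Real.exp_pos x2)])
        _ = 4 * x2 * (Real.exp (x1 - t) * Real.exp x2 * Real.exp (x3 - t)) * s ^ 2 := by ring
        _ = 4 * x2 * Real.exp (-t) * s ^ 2 := by rw [eexp1]
    have h6 := mul_le_mul_of_nonneg_right h42
      (mul_nonneg (Real.exp_pos (-t)).le (sq_nonneg s))
    nlinarith [key1, h6]
  · rw [hnorm, div_le_iff₀ (pow_pos hs 2)]
    have key2 : 4 * s1 * s2 * s3 ≤ 4 * s^3 * (Real.exp (-t) * Real.exp (-t)) := by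
      calc 4 * s1 * s2 * s3
          ≤ 4 * (s * Real.exp (x1 - t)) * (s * Real.exp (x2 - t)) * (s * Real.exp (x3 - t)) := by
            apply mul_le_mul (mul_le_mul (by linarith) h2b hs2.le
              (by nlinarith [Real.exp_pos (x1 - t)])) h3 hs3.le
              (by nlinarith [mul_pos hs (Real.exp_pos (x1 - t)),
                mul_pos hs (Real.exp_pos (x2 - t))])
        _ = 4 * s^3 * (Real.exp (x1 - t) * Real.exp (x2 - t) * Real.exp (x3 - t)) := by ring
        _ = 4 * s^3 * (Real.exp (-t) * Real.exp (-t)) := by rw [eexp2]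
    have h5 : s * Real.exp (-t) ≤ 1/2 := by
      have h7 := mul_le_mul_of_nonneg_right hsle (Real.exp_pos (-t)).le
      nlinarith [hexpinv]
    have h6 := mul_le_mul_of_nonneg_left h5
      (show (0:ℝ) ≤ 4 * s^2 * Real.exp (-t) by positivity)
    nlinarith [key2, h6]

/-! ### Norm bounds for the integrand and its derivative -/

lemma norm_fT_le (N : ℕ) (hN : 2 ≤ N) (B : ℝ) (hB0 : 0 < B) (hB2 : B < 2)
    {t : ℝ} (ht : 0 < t) (θ : ℂ) :
    ‖fT N B θ t‖ ≤ 2 * Real.exp ((|1 - θ.im/Real.pi| - 1) * t) := by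
  have hg := (gT_bounds N hN B hB0 hB2 ht).1
  have htre : (((t:ℂ)) * (1 - θ/(I*(Real.pi:ℂ)))).re = t * (1 - θ.im/Real.pi) := by
    rw [show (((t:ℂ)) * (1 - θ/(I*(Real.pi:ℂ)))).re
        = t * (1 - θ/(I*(Real.pi:ℂ))).re from by simp [Complex.mul_re], w_re]
  have hc : ‖Complex.cosh ((t:ℂ) * (1 - θ/(I*(Real.pi:ℂ))))‖
      ≤ Real.exp (|1 - θ.im/Real.pi| * t) := by
    refine (norm_cosh_le _).trans (Real.exp_le_exp.2 ?_)
    rw [htre, abs_mul, abs_of_pos ht]; ring_nf; exact le_refl _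
  have h1t : ‖(1/(t:ℂ))‖ = 1/t := by
    simp [Complex.norm_real, abs_of_pos ht]
  have heq : fT N B θ t
      = (1/(t:ℂ)) * gT N B t * Complex.cosh ((t:ℂ)*(1-θ/(I*(Real.pi:ℂ)))) := rfl
  have hexp : Real.exp (-t) * Real.exp (|1 - θ.im/Real.pi| * t)
      = Real.exp ((|1 - θ.im/Real.pi| - 1)*t) := by
    rw [← Real.exp_add]; ring_nf
  calc ‖fT N B θ t‖
      = (1/t) * ‖gT N B t‖ * ‖Complex.cosh ((t:ℂ)*(1-θ/(I*(Real.pi:ℂ))))‖ := by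
        rw [heq, norm_mul, norm_mul, h1t]
    _ ≤ (1/t) * (2*t*Real.exp (-t)) * Real.exp (|1 - θ.im/Real.pi| * t) := by
        gcongr
    _ = 2 * Real.exp ((|1 - θ.im/Real.pi| - 1)*t) := by
        rw [← hexp]; field_simp

lemma norm_fT'_le (N : ℕ) (hN : 2 ≤ N) (B : ℝ) (hB0 : 0 < B) (hB2 : B < 2)
    {t : ℝ} (ht : 0 < t) (θ : ℂ) :
    ‖fT' N B θ t‖ ≤ Real.exp ((|1 - θ.im/Real.pi| - 1) * t) := by
  have hπ := Real.pi_pos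
  have hg := (gT_bounds N hN B hB0 hB2 ht).2
  have htre : (((t:ℂ)) * (1 - θ/(I*(Real.pi:ℂ)))).re = t * (1 - θ.im/Real.pi) := by
    rw [show (((t:ℂ)) * (1 - θ/(I*(Real.pi:ℂ)))).re
        = t * (1 - θ/(I*(Real.pi:ℂ))).re from by simp [Complex.mul_re], w_re]
  have hc : ‖Complex.sinh ((t:ℂ) * (1 - θ/(I*(Real.pi:ℂ))))‖
      ≤ Real.exp (|1 - θ.im/Real.pi| * t) := by
    refine (norm_sinh_le _).trans (Real.exp_le_exp.2 ?_)
    rw [htre, abs_mul, abs_of_pos ht]; ring_nf; exact le_refl _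
  have h1t : ‖(1/(t:ℂ))‖ = 1/t := by
    simp [Complex.norm_real, abs_of_pos ht]
  have h2t : ‖(t:ℂ) * -(1/(I*(Real.pi:ℂ)))‖ = t * (1/Real.pi) := by
    simp [map_mul, Complex.norm_real, Complex.norm_I,
      abs_of_pos ht, _root_.abs_of_pos hπ, map_div₀]
  have hexp : Real.exp (-t) * Real.exp (|1 - θ.im/Real.pi| * t)
      = Real.exp ((|1 - θ.im/Real.pi| - 1)*t) := by
    rw [← Real.exp_add]; ring_nf
  have heq : ‖fT' N B θ t‖
      = (1/t) * ‖gT N B t‖ *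
        (‖Complex.sinh ((t:ℂ)*(1-θ/(I*(Real.pi:ℂ))))‖ * (t * (1/Real.pi))) := by
    unfold fT'
    rw [norm_mul, norm_mul, norm_mul, h1t, h2t]
  rw [heq]
  calc (1/t) * ‖gT N B t‖ *
        (‖Complex.sinh ((t:ℂ)*(1-θ/(I*(Real.pi:ℂ))))‖ * (t * (1/Real.pi)))
      ≤ (1/t) * (2*Real.exp (-t)) * (Real.exp (|1 - θ.im/Real.pi| * t) * (t * (1/Real.pi))) := by
        gcongr
    _ = (2/Real.pi) * Real.exp ((|1 - θ.im/Real.pi| - 1)*t) := by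
        rw [← hexp]; field_simp
    _ ≤ Real.exp ((|1 - θ.im/Real.pi| - 1)*t) := by
        have h2π : 2/Real.pi ≤ 1 := by
          rw [div_le_one hπ]; linarith [Real.pi_gt_three]
        nlinarith [Real.exp_pos ((|1 - θ.im/Real.pi| - 1)*t)]

/-! ### Differentiability in `θ` and measurability in `t` -/

lemma hasDerivAt_fT (N : ℕ) (B : ℝ) (t : ℝ) (θ : ℂ) :
    HasDerivAt (fun θ => fT N B θ t) (fT' N B θ t) θ := by
  have h1 : HasDerivAt (fun θ : ℂ => (t:ℂ) * (1 - θ / (I * (Real.pi:ℂ))))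
      ((t:ℂ) * -(1/(I*(Real.pi:ℂ)))) θ := by
    simpa using (((hasDerivAt_id θ).div_const (I*(Real.pi:ℂ))).const_sub 1).const_mul (t:ℂ)
  have h2 := (Complex.hasDerivAt_cosh _).comp θ h1
  have h3 := h2.const_mul ((1/(t:ℂ)) * gT N B t)
  simpa [fT, fT', gT, Function.comp, mul_assoc] using h3

lemma fT_measurable (N : ℕ) (B : ℝ) (θ : ℂ) : Measurable (fun t => fT N B θ t) := by
  unfold fT; fun_prop

lemma fT'_measurable (N : ℕ) (B : ℝ) (θ : ℂ) : Measurable (fun t => fT' N B θ t) := by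
  unfold fT' gT; fun_prop

/-! ### Main theorem -/

theorem FT_integrable_and_holomorphic (N : ℕ) (hN : 2 ≤ N) (B : ℝ)
    (hB0 : 0 < B) (hB2 : B < 2) :
    (∀ θ : ℂ, 0 < θ.im → θ.im < 2 * Real.pi → IntegrableOn (fT N B θ) (Set.Ioi 0)) ∧
    DifferentiableOn ℂ (FT N B) {θ : ℂ | 0 < θ.im ∧ θ.im < 2 * Real.pi} := by
  have hπ := Real.pi_pos
  have hint : ∀ θ : ℂ, 0 < θ.im → θ.im < 2*Real.pi → IntegrableOn (fT N B θ) (Set.Ioi 0) := by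
    intro θ h1 h2
    have ha : |1 - θ.im/Real.pi| < 1 := by
      rw [abs_lt]
      constructor
      · have : θ.im/Real.pi < 2 := by rw [div_lt_iff₀ hπ]; linarith
        linarith
      · have : 0 < θ.im/Real.pi := div_pos h1 hπ
        linarith
    have hb : Integrable (fun t => 2 * Real.exp ((|1 - θ.im/Real.pi| - 1)*t))
        (volume.restrict (Set.Ioi (0:ℝ))) := by
      have h0 := (exp_neg_integrableOn_Ioi 0
        (show 0 < 1-|1 - θ.im/Real.pi| by linarith)).const_mul 2
      have he : (fun t : ℝ => 2 * Real.exp ((|1 - θ.im/Real.pi| - 1)*t))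
          = (fun t => 2 * Real.exp (-(1-|1 - θ.im/Real.pi|)*t)) := by
        funext t; ring_nf
      rw [he]; exact h0
    refine Integrable.mono' hb ((fT_measurable N B θ).aestronglyMeasurable) ?_
    rw [ae_restrict_iff' measurableSet_Ioi]
    exact ae_of_all _ fun t ht => norm_fT_le N hN B hB0 hB2 ht θ
  refine ⟨hint, ?_⟩
  intro θ₀ hθ₀
  obtain ⟨h1, h2⟩ := hθ₀
  set δ := min θ₀.im (2*Real.pi - θ₀.im) / 2 with hδdef
  have hδ : 0 < δ := by
    apply div_pos (lt_min h1 (by linarith)) two_pos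
  have hδpi : δ < Real.pi := by
    have hm := min_le_right θ₀.im (2*Real.pi - θ₀.im)
    rw [hδdef]; rw [div_lt_iff₀ (two_pos)]; linarith
  set a := 1 - δ/Real.pi with hadef
  have hδπp : 0 < δ/Real.pi := div_pos hδ hπ
  have ha1 : a < 1 := by rw [hadef]; linarith
  have hball : ∀ θ ∈ Metric.ball θ₀ δ, |1 - θ.im/Real.pi| ≤ a := by
    intro θ hθ
    have him : |θ.im - θ₀.im| < δ := by
      have h3 := Complex.abs_im_le_norm (θ - θ₀)
      have h4 : dist θ θ₀ < δ := Metric.mem_ball.1 hθ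
      rw [Complex.dist_eq] at h4
      rw [← Complex.sub_im]
      exact lt_of_le_of_lt h3 h4
    have habs := abs_lt.1 him
    have hminl := min_le_left θ₀.im (2*Real.pi - θ₀.im)
    have hminr := min_le_right θ₀.im (2*Real.pi - θ₀.im)
    have hδim : 2*δ ≤ θ₀.im := by rw [hδdef] at *; linarith
    have hδim2 : 2*δ ≤ 2*Real.pi - θ₀.im := by rw [hδdef] at *; linarith
    have hl : δ ≤ θ.im := by linarith
    have hr : θ.im ≤ 2*Real.pi - δ := by linarith
    rw [abs_le, hadef]
    have hd1 : δ/Real.pi ≤ θ.im/Real.pi := by gcongr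
    have hd2 : θ.im/Real.pi ≤ (2*Real.pi - δ)/Real.pi := by gcongr
    have heq2 : (2*Real.pi - δ)/Real.pi = 2 - δ/Real.pi := by field_simp
    constructor
    · rw [heq2] at hd2; linarith
    · linarith
  have hmeas : ∀ θ : ℂ, AEStronglyMeasurable (fun t => fT N B θ t)
      (volume.restrict (Set.Ioi (0:ℝ))) :=
    fun θ => (fT_measurable N B θ).aestronglyMeasurable
  have hmeas' : AEStronglyMeasurable (fun t => fT' N B θ₀ t)
      (volume.restrict (Set.Ioi (0:ℝ))) :=
    (fT'_measurable N B θ₀).aestronglyMeasurable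
  have hbound_int : Integrable (fun t => Real.exp ((a-1)*t))
      (volume.restrict (Set.Ioi (0:ℝ))) := by
    have h0 := exp_neg_integrableOn_Ioi 0 (show 0 < 1-a by linarith)
    have he : (fun t : ℝ => Real.exp ((a-1)*t)) = (fun t => Real.exp (-(1-a)*t)) := by
      funext t; ring_nf
    rw [he]; exact h0
  have h_bound : ∀ᵐ t ∂(volume.restrict (Set.Ioi (0:ℝ))),
      ∀ θ ∈ Metric.ball θ₀ δ, ‖fT' N B θ t‖ ≤ Real.exp ((a-1)*t) := by
    rw [ae_restrict_iff' measurableSet_Ioi]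
    refine ae_of_all _ fun t ht θ hθ => ?_
    have ht' : (0:ℝ) < t := ht
    refine (norm_fT'_le N hN B hB0 hB2 ht' θ).trans (Real.exp_le_exp.2 ?_)
    have hba := hball θ hθ
    exact mul_le_mul_of_nonneg_right (by linarith) ht'.le
  have hF_int : Integrable (fun t => fT N B θ₀ t) (volume.restrict (Set.Ioi (0:ℝ))) :=
    hint θ₀ h1 h2
  have key := hasDerivAt_integral_of_dominated_loc_of_deriv_le (Metric.ball_mem_nhds θ₀ hδ)
    (Filter.Eventually.of_forall hmeas) hF_int hmeas' h_bound hbound_int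
    (Filter.Eventually.of_forall fun t θ _ => hasDerivAt_fT N B t θ)
  have hd := key.2
  have hda : DifferentiableAt ℂ (FT N B) θ₀ := by
    have := hd.differentiableAt.cexp
    exact this
  exact hda.differentiableWithinAt
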